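/- Let F_q be a finite field with q ≡ 1 (mod 4) and let n ≥ 1 be an integer with gcd(n+1, q(q²−1)/2) = 1. Let μ ∈ F_q with μ² = −1 (which exists since q ≡ 1 mod 4). Then for every a ∈ F_q \ {μ+2, −μ+2, μ−2, −μ−2}, the matrix I_n + T_n(a)² is invertible (i.e., the code C_n(a) with generator matrix (I_n | T_n(a)) is LCD). -/
import Mathlib

/-- The `n × n` tridiagonal Toeplitz matrix with diagonal entries `a` and
sub/super-diagonal entries `b`. -/
def triToeplitz (F : Type*) [Field F] (n : ℕ) (a b : F) :
    Matrix (Fin n) (Fin n) F :=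
  Matrix.of fun i j =>
    if (i : ℕ) = (j : ℕ) then a
    else if (i : ℕ) + 1 = (j : ℕ) ∨ (j : ℕ) + 1 = (i : ℕ) then b
    else 0


def cheb {R : Type*} [CommRing R] (c : R) : ℕ → R
  | 0 => 1
  | 1 => c
  | (k+2) => c * cheb c (k+1) - cheb c k

lemma kernel_cheb {F : Type*} [Field F] {n : ℕ} (c : F) (v : Fin n → F)
    (hv : (triToeplitz F n c 1).mulVec v = 0) (hvne : v ≠ 0) : cheb c n = 0 := by
  classical
  set w : ℕ → F := fun k => if h : k < n then v ⟨k, h⟩ else 0 with hw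
  have hwn : w n = 0 := dif_neg (lt_irrefl n)
  have hwbig : ∀ k, n ≤ k → w k = 0 := fun k hk => dif_neg (not_lt.mpr hk)
  -- row equations
  have row : ∀ i : ℕ, i < n →
      c * w i + w (i+1) + (if i = 0 then 0 else w (i-1)) = 0 := by
    intro i hi
    have h0 := congrFun hv ⟨i, hi⟩
    have hsum : (triToeplitz F n c 1).mulVec v ⟨i, hi⟩
        = ∑ k ∈ Finset.range n,
          (if i = k then c else if i + 1 = k ∨ k + 1 = i then (1:F) else 0) * w k := by
      rw [Matrix.mulVec, dotProduct]
      rw [← Fin.sum_univ_eq_sum_range (fun k =>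
          (if i = k then c else if i + 1 = k ∨ k + 1 = i then (1:F) else 0) * w k) n]
      apply Finset.sum_congr rfl
      intro j _
      have hwj : w (j : ℕ) = v j := by
        simp only [hw]
        rw [dif_pos j.isLt]
      rw [hwj]
      rfl
    have hsplit : ∀ k, (if i = k then c else if i + 1 = k ∨ k + 1 = i then (1:F) else 0) * w k
        = (if k = i then c * w k else 0) + (if k = i+1 then w k else 0)
          + (if k + 1 = i then w k else 0) := by
      intro k
      split_ifs <;> first | (exfalso; omega) | ring
    rw [Finset.sum_congr rfl (fun k _ => hsplit k)] at hsum
    rw [Finset.sum_add_distrib, Finset.sum_add_distrib] at hsum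
    rw [Finset.sum_ite_eq' (Finset.range n) i (fun k => c * w k)] at hsum
    rw [Finset.sum_ite_eq' (Finset.range n) (i+1) (fun k => w k)] at hsum
    have h1 : (if i ∈ Finset.range n then c * w i else 0) = c * w i := by
      rw [if_pos (Finset.mem_range.mpr hi)]
    have h2 : (if i + 1 ∈ Finset.range n then w (i+1) else 0) = w (i+1) := by
      by_cases h : i + 1 ∈ Finset.range n
      · rw [if_pos h]
      · rw [if_neg h, hwbig (i+1) (by simpa using h)]
    have h3 : (∑ k ∈ Finset.range n, if k + 1 = i then w k else 0)
        = (if i = 0 then 0 else w (i-1)) := by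
      by_cases hi0 : i = 0
      · subst hi0
        simp
      · rw [if_neg hi0]
        obtain ⟨j, rfl⟩ := Nat.exists_eq_succ_of_ne_zero hi0
        have : ∀ k, (if k + 1 = j + 1 then w k else 0) = (if k = j then w k else 0) := by
          intro k; split_ifs <;> first | rfl | omega
        rw [Finset.sum_congr rfl (fun k _ => this k)]
        rw [Finset.sum_ite_eq' (Finset.range n) j (fun k => w k)]
        rw [if_pos (Finset.mem_range.mpr (by omega))]
        simp
    rw [h1, h2, h3] at hsum
    rw [hsum, Pi.zero_apply] at h0
    exact h0
  -- main claim
  have main : ∀ k, k ≤ n → w k = (-1)^k * cheb c k * w 0 := by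
    intro k
    induction k using Nat.strong_induction_on with
    | _ k ih =>
      match k with
      | 0 => intro _; simp [cheb]
      | 1 =>
        intro h1
        have hr := row 0 (by omega)
        rw [if_pos rfl] at hr
        rw [show cheb c 1 = c from rfl]
        linear_combination hr
      | (k+2) =>
        intro hk2
        have hr := row (k+1) (by omega)
        rw [if_neg (by omega)] at hr
        have e1 : w (k+1) = (-1)^(k+1) * cheb c (k+1) * w 0 := ih (k+1) (by omega) (by omega)
        have e2 : w k = (-1)^k * cheb c k * w 0 := ih k (by omega) (by omega)
        have hsimp : (k + 1 - 1) = k := by omega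
        rw [hsimp] at hr
        rw [show k + 1 + 1 = k + 2 from rfl] at hr
        rw [show cheb c (k+2) = c * cheb c (k+1) - cheb c k from rfl]
        linear_combination hr - c * e1 - e2
  have hn0 := main n le_rfl
  rw [hwn] at hn0
  have hw0 : w 0 ≠ 0 := by
    intro h0
    apply hvne
    funext j
    have hm := main (j : ℕ) (le_of_lt j.isLt)
    rw [h0, mul_zero] at hm
    have hwj : w (j : ℕ) = v j := by
      simp only [hw]; rw [dif_pos j.isLt]
    rw [hwj] at hm
    exact hm
  rcases mul_eq_zero.mp hn0.symm with h | h
  · rcases mul_eq_zero.mp h with h' | h'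
    · exact absurd h' (pow_ne_zero _ (by norm_num))
    · exact h'
  · exact absurd h hw0

lemma cheb_map {R S : Type*} [CommRing R] [CommRing S] (φ : R →+* S) (c : R) :
    ∀ k, φ (cheb c k) = cheb (φ c) k := by
  intro k
  induction k using Nat.strong_induction_on with
  | _ k ih =>
    match k with
    | 0 => simp [cheb]
    | 1 => simp [cheb]
    | (k+2) =>
      rw [show cheb c (k+2) = c * cheb c (k+1) - cheb c k from rfl,
        show cheb (φ c) (k+2) = φ c * cheb (φ c) (k+1) - cheb (φ c) k from rfl,
        map_sub, map_mul, ih (k+1) (by omega), ih k (by omega)]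

lemma cheb_id {K : Type*} [CommRing K] (α β : K) (h : α * β = 1) :
    ∀ k, (α - β) * cheb (α + β) k = α ^ (k+1) - β ^ (k+1) := by
  intro k
  induction k using Nat.strong_induction_on with
  | _ k ih =>
    match k with
    | 0 => rw [show cheb (α+β) 0 = 1 from rfl]; ring
    | 1 =>
      rw [show cheb (α+β) 1 = α + β from rfl]
      ring
    | (k+2) =>
      have i1 := ih (k+1) (by omega)
      have i2 := ih k (by omega)
      rw [show cheb (α+β) (k+2) = (α+β) * cheb (α+β) (k+1) - cheb (α+β) k from rfl]
      have hb : β ^ (k+1) * α = β ^ k := by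
        calc β ^ (k+1) * α = β ^ k * (α * β) := by ring
        _ = β ^ k := by rw [h, mul_one]
      have ha : α ^ (k+1) * β = α ^ k := by
        calc α ^ (k+1) * β = α ^ k * (α * β) := by ring
        _ = α ^ k := by rw [h, mul_one]
      linear_combination (α + β) * i1 - i2 + (α ^ (k+1) - β ^ (k+1)) * h

lemma cheb_two {F : Type*} [CommRing F] : ∀ k, cheb (2 : F) k = (k + 1 : ℕ) := by
  intro k
  induction k using Nat.strong_induction_on with
  | _ k ih =>
    match k with
    | 0 => simp [cheb]
    | 1 => simp [cheb]
    | (k+2) =>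
      rw [show cheb (2:F) (k+2) = 2 * cheb 2 (k+1) - cheb 2 k from rfl,
        ih (k+1) (by omega), ih k (by omega)]
      push_cast
      ring

lemma cheb_neg_two {F : Type*} [CommRing F] :
    ∀ k, cheb (-2 : F) k = (-1) ^ k * (k + 1 : ℕ) := by
  intro k
  induction k using Nat.strong_induction_on with
  | _ k ih =>
    match k with
    | 0 => simp [cheb]
    | 1 => simp [cheb]
    | (k+2) =>
      rw [show cheb (-2:F) (k+2) = -2 * cheb (-2) (k+1) - cheb (-2) k from rfl,
        ih (k+1) (by omega), ih k (by omega)]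
      push_cast
      ring

lemma alpha_sq_eq_one {K : Type*} [Monoid K] {α : K} {n q : ℕ}
    (hq2 : q % 2 = 1)
    (hcop : Nat.gcd (n + 1) (q * (q ^ 2 - 1) / 2) = 1)
    (h1 : α ^ (2 * (n + 1)) = 1) (h2 : α ^ (q ^ 2 - 1) = 1) : α ^ 2 = 1 := by
  have hdvd : 2 ∣ q ^ 2 - 1 := by
    have : q ^ 2 % 2 = 1 := by
      rw [Nat.pow_mod, hq2]
    omega
  set m := (q ^ 2 - 1) / 2 with hm
  have hm2 : q ^ 2 - 1 = 2 * m := (Nat.mul_div_cancel' hdvd).symm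
  have hqm : q * (q ^ 2 - 1) / 2 = q * m := by
    rw [Nat.mul_div_assoc q hdvd]
  rw [hqm] at hcop
  have hcop' : Nat.gcd (n + 1) m = 1 :=
    Nat.Coprime.coprime_dvd_right (dvd_mul_left m q) hcop
  have hgcd : Nat.gcd (2 * (n + 1)) (2 * m) = 2 := by
    rw [Nat.gcd_mul_left, hcop', mul_one]
  have hd1 : orderOf α ∣ 2 * (n + 1) := orderOf_dvd_of_pow_eq_one h1
  have hd2 : orderOf α ∣ 2 * m := by rw [← hm2]; exact orderOf_dvd_of_pow_eq_one h2
  have : orderOf α ∣ 2 := hgcd ▸ Nat.dvd_gcd hd1 hd2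
  exact orderOf_dvd_iff_pow_eq_one.mp this

lemma beta_eq_alpha {K : Type*} [Field K] {α β : K} {n q : ℕ}
    (hq2 : q % 2 = 1)
    (hcop : Nat.gcd (n + 1) (q * (q ^ 2 - 1) / 2) = 1)
    (hmul : α * β = 1) (hch : cheb (α + β) n = 0)
    (hpow : α ^ (q ^ 2 - 1) = 1) : α = β := by
  have hα0 : α ≠ 0 := left_ne_zero_of_mul_eq_one hmul
  have hid := cheb_id α β hmul n
  rw [hch, mul_zero] at hid
  have hpow1 : α ^ (n + 1) = β ^ (n + 1) := by
    have := sub_eq_zero.mp hid.symm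
    exact this
  have h1 : α ^ (2 * (n + 1)) = 1 := by
    rw [two_mul, pow_add]
    nth_rewrite 2 [hpow1]
    rw [← mul_pow, hmul, one_pow]
  have hsq : α ^ 2 = 1 := alpha_sq_eq_one hq2 hcop h1 hpow
  have : α * α = α * β := by
    rw [hmul, ← hsq, sq]
  exact mul_left_cancel₀ hα0 this

lemma cheb_ne_zero {F : Type*} [Field F] [Fintype F] (n : ℕ)
    (hq : Fintype.card F % 4 = 1)
    (hcop : Nat.gcd (n + 1)
      (Fintype.card F * (Fintype.card F ^ 2 - 1) / 2) = 1) :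
    ∀ c : F, cheb c n ≠ 0 := by
  classical
  set q := Fintype.card F with hqdef
  have hq2 : q % 2 = 1 := by omega
  have hqge : 2 ≤ q := Fintype.one_lt_card
  -- characteristic facts
  set p := ringChar F with hpdef
  have hpp : p.Prime := CharP.char_is_prime F p
  have hpq : p ∣ q := by
    obtain ⟨k, -, hk⟩ := FiniteField.card F p
    rw [hqdef, hk]
    exact dvd_pow_self p k.ne_zero
  have hn1 : ((n + 1 : ℕ) : F) ≠ 0 := by
    intro h
    have hdvd : p ∣ n + 1 := (CharP.cast_eq_zero_iff F p (n + 1)).mp (by exact_mod_cast h)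
    have hdvd2 : p ∣ q * (q ^ 2 - 1) / 2 := by
      have h2 : 2 ∣ q ^ 2 - 1 := by
        have : q ^ 2 % 2 = 1 := by rw [Nat.pow_mod, hq2]
        omega
      rw [Nat.mul_div_assoc q h2]
      exact Dvd.dvd.mul_right hpq _
    have : p ∣ 1 := hcop ▸ Nat.dvd_gcd hdvd hdvd2
    exact hpp.one_lt.ne' (Nat.dvd_one.mp this)
  have h2F : (2 : F) ≠ 0 := by
    intro h
    have : p ∣ 2 := (CharP.cast_eq_zero_iff F p 2).mp (by exact_mod_cast h)
    have hp2 : p = 2 := ((Nat.prime_dvd_prime_iff_eq hpp Nat.prime_two).mp this)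
    rw [hp2] at hpq
    omega
  intro c h0
  by_cases hs : ∃ x : F, x ^ 2 = c ^ 2 - 4
  · obtain ⟨x, hx⟩ := hs
    by_cases hx0 : x = 0
    · -- c = ±2
      rw [hx0] at hx
      have hc4 : (c - 2) * (c + 2) = 0 := by linear_combination -hx
      rcases mul_eq_zero.mp hc4 with h | h
      · have hc : c = 2 := by linear_combination h
        rw [hc, cheb_two n] at h0
        exact hn1 (by exact_mod_cast h0)
      · have hc : c = -2 := by linear_combination h
        rw [hc, cheb_neg_two n] at h0
        rcases mul_eq_zero.mp h0 with h' | h'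
        · exact pow_ne_zero _ (by norm_num : (-1 : F) ≠ 0) h'
        · exact hn1 h'
    · -- roots in F
      set α := (c + x) / 2 with hα
      set β := (c - x) / 2 with hβ
      have hmul : α * β = 1 := by
        rw [hα, hβ]
        field_simp
        linear_combination -hx
      have hsum : α + β = c := by rw [hα, hβ]; field_simp; ring
      have hdiff : α - β = x := by rw [hα, hβ]; field_simp; ring
      have hα0 : α ≠ 0 := left_ne_zero_of_mul_eq_one hmul
      have hpow : α ^ (q ^ 2 - 1) = 1 := by
        obtain ⟨k, hk⟩ : ∃ k, q = k + 2 := ⟨q - 2, by omega⟩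
        have hfac : q ^ 2 - 1 = (q - 1) * (q + 1) := by
          rw [hk]
          have e1 : k + 2 - 1 = k + 1 := by omega
          rw [e1]
          have e2 : (k + 2) ^ 2 = (k + 1) * (k + 2 + 1) + 1 := by ring
          omega
        rw [hfac, pow_mul, FiniteField.pow_card_sub_one_eq_one α hα0, one_pow]
      have := beta_eq_alpha hq2 hcop hmul (by rw [hsum]; exact h0) hpow
      exact hx0 (by rw [← hdiff, this, sub_self])
  · -- quadratic extension
    push_neg at hs
    set f : Polynomial F := Polynomial.X ^ 2 - Polynomial.C c * Polynomial.X + 1 with hf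
    have hfmonic : f.Monic := by rw [hf]; monicity!
    have hfdeg : f.natDegree = 2 := by rw [hf]; compute_degree!
    have hfirr : Irreducible f := by
      rw [hfmonic.irreducible_iff_roots_eq_zero_of_degree_le_three
        (by rw [hfdeg]) (by rw [hfdeg]; omega)]
      rw [Multiset.eq_zero_iff_forall_notMem]
      intro r hr
      have hroot := Polynomial.isRoot_of_mem_roots hr
      have heval : r ^ 2 - c * r + 1 = 0 := by
        have := hroot
        rw [hf] at this
        simpa [Polynomial.IsRoot] using this
      exact hs (2 * r - c) (by linear_combination 4 * heval)
    haveI : Fact (Irreducible f) := ⟨hfirr⟩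
    have hf0 : f ≠ 0 := hfmonic.ne_zero
    let pb := AdjoinRoot.powerBasis hf0
    haveI : Module.Finite F (AdjoinRoot f) := Module.Finite.of_basis pb.basis
    haveI : Finite (AdjoinRoot f) := Module.finite_of_finite F
    haveI : Fintype (AdjoinRoot f) := Fintype.ofFinite _
    have hrank : Module.finrank F (AdjoinRoot f) = 2 := by
      rw [pb.finrank]
      show f.natDegree = 2
      exact hfdeg
    have hcard : Fintype.card (AdjoinRoot f) = q ^ 2 := by
      rw [Module.card_eq_pow_finrank (K := F) (V := AdjoinRoot f), hrank]
    set φ : F →+* AdjoinRoot f := AdjoinRoot.of f with hφ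
    set α : AdjoinRoot f := AdjoinRoot.root f with hαdef
    have hroot : α ^ 2 - φ c * α + 1 = 0 := by
      have := AdjoinRoot.eval₂_root f
      rw [hf] at this
      simpa using this
    set β : AdjoinRoot f := φ c - α with hβdef
    have hmul : α * β = 1 := by
      rw [hβdef]
      linear_combination -hroot
    have hchK : cheb (α + β) n = 0 := by
      have hab : α + β = φ c := by rw [hβdef]; ring
      rw [hab, ← cheb_map φ c n, h0, map_zero]
    have hα0 : α ≠ 0 := left_ne_zero_of_mul_eq_one hmul
    have hpow : α ^ (q ^ 2 - 1) = 1 := by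
      have := FiniteField.pow_card_sub_one_eq_one α hα0
      rwa [hcard] at this
    have heq : α = β := beta_eq_alpha hq2 hcop hmul hchK hpow
    have hzero : φ (c ^ 2 - 4) = 0 := by
      simp only [map_sub, map_pow, map_ofNat]
      have hab : φ c = α + β := by rw [hβdef]; ring
      rw [hab]
      linear_combination (α - β) * heq + 4 * hmul
    have hc4 : c ^ 2 - 4 = 0 := by
      apply φ.injective
      rw [hzero, map_zero]
    exact hs 0 (by rw [hc4]; ring)

lemma tri_add_smul (F : Type*) [Field F] (n : ℕ) (a d : F) :
    triToeplitz F n a 1 + d • (1 : Matrix (Fin n) (Fin n) F)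
      = triToeplitz F n (a + d) 1 := by
  ext i j
  simp only [Matrix.add_apply, Matrix.smul_apply, Matrix.one_apply, triToeplitz,
    Matrix.of_apply, smul_eq_mul]
  by_cases h : (i : ℕ) = (j : ℕ)
  · rw [if_pos h, if_pos h, if_pos (Fin.ext h), mul_one]
  · rw [if_neg h, if_neg h, if_neg (fun he => h (congrArg Fin.val he)), mul_zero, add_zero]

lemma tri_sub_smul (F : Type*) [Field F] (n : ℕ) (a d : F) :
    triToeplitz F n a 1 - d • (1 : Matrix (Fin n) (Fin n) F)
      = triToeplitz F n (a - d) 1 := by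
  rw [sub_eq_add_neg, ← neg_smul, tri_add_smul, ← sub_eq_add_neg]

lemma tri_isUnit {F : Type*} [Field F] [Fintype F] {n : ℕ}
    (hq : Fintype.card F % 4 = 1)
    (hcop : Nat.gcd (n + 1)
      (Fintype.card F * (Fintype.card F ^ 2 - 1) / 2) = 1)
    (c : F) : IsUnit (triToeplitz F n c 1) := by
  rw [Matrix.isUnit_iff_isUnit_det, isUnit_iff_ne_zero]
  intro hdet
  obtain ⟨v, hv0, hv⟩ := (Matrix.exists_mulVec_eq_zero_iff).mpr hdet
  exact cheb_ne_zero n hq hcop c (kernel_cheb c v hv hv0)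

/-- `q ≡ 1 (mod 4)` and `gcd(n+1, q(q^2-1)/2) = 1`: for `μ ∈ F_q` with
`μ^2 = -1`, the code `C_n(a)` is LCD for all `a ∉ {μ+2, -μ+2, μ-2, -μ-2}`. -/
theorem stmt_11 (F : Type*) [Field F] [Fintype F]
    (n : ℕ) (hn : 1 ≤ n)
    (hq : Fintype.card F % 4 = 1)
    (hcop : Nat.gcd (n + 1)
      (Fintype.card F * (Fintype.card F ^ 2 - 1) / 2) = 1)
    (μ : F) (hμ : μ ^ 2 = -1) :
    ∀ a : F, a ∉ ({μ + 2, -μ + 2, μ - 2, -μ - 2} : Set F) →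
      IsUnit ((1 : Matrix (Fin n) (Fin n) F) + (triToeplitz F n a 1) ^ 2) := by
  intro a _
  set T := triToeplitz F n a 1 with hT
  have hμμ : (μ * μ) • (1 : Matrix (Fin n) (Fin n) F) = -1 := by
    rw [show μ * μ = -1 by linear_combination hμ, neg_smul, one_smul]
  have hfac : (1 : Matrix (Fin n) (Fin n) F) + T ^ 2
      = (T + μ • 1) * (T - μ • 1) := by
    simp only [add_mul, mul_sub, Matrix.smul_mul, Matrix.mul_smul,
      Matrix.mul_one, Matrix.one_mul, smul_smul]
    rw [hμμ, pow_two]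
    abel
  rw [hfac, tri_add_smul, tri_sub_smul]
  exact (tri_isUnit hq hcop (a + μ)).mul (tri_isUnit hq hcop (a - μ))
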